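/- arXiv:0907.3743 — 6 statements merged into one kernel-verified Lean document; each statement's English description precedes it below -/
import Mathlib

section
/- For all integers d ≥ 2 and s ≥ d, the quantity |𝒯_s^{(d)}| = Σ_{u+v = s−d, u,v ≥ 0} (2v+1) · t_v · ť_{u+d}^{(d)} (which counts plane rooted trees with s edges containing a vertex of exit degree d) satisfies |𝒯_s^{(d)}| ≤ (2s+1) · (3/4)^{d−2} · t_s. -/
open Finset

/-- `t_k = (2k)!/(k!(k+1)!)`, the `k`-th Catalan number, as a real number. -/
noncomputable def tReal (k : ℕ) : ℝ :=
  (Nat.factorial (2 * k) : ℝ) / ((Nat.factorial k : ℝ) * (Nat.factorial (k + 1) : ℝ))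

/-- `ť_s^{(d)} = Σ_{l₁+⋯+l_d = s−d} t_{l₁}⋯t_{l_d}`, the number of plane rooted trees with
`s` edges whose root has exit degree `d`; it is `0` when `d = 0` or `d > s`. -/
noncomputable def tcheck (s d : ℕ) : ℝ :=
  if d = 0 ∨ s < d then 0
  else ∑ l ∈ Finset.Nat.antidiagonalTuple d (s - d), ∏ i, tReal (l i)

lemma tReal_eq_catalan (k : ℕ) : tReal k = (catalan k : ℝ) := by
  have h1 : Nat.choose (2 * k) k * Nat.factorial k * Nat.factorial k = Nat.factorial (2 * k) := by
    have := Nat.choose_mul_factorial_mul_factorial (n := 2 * k) (k := k) (by omega)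
    simpa [show 2 * k - k = k by omega] using this
  have h2 : (k + 1) * catalan k = Nat.choose (2 * k) k :=
    succ_mul_catalan_eq_centralBinom k
  have hk : (Nat.factorial k : ℝ) ≠ 0 := by positivity
  have hk1 : ((k : ℝ) + 1) ≠ 0 := by positivity
  rw [tReal, Nat.factorial_succ]
  rw [← h1, ← h2]
  push_cast
  field_simp

lemma tReal_nonneg (k : ℕ) : 0 ≤ tReal k := by rw [tReal]; positivity

lemma tReal_zero : tReal 0 = 1 := by simp [tReal_eq_catalan]

/-- Catalan growth: `t_{k+1} ≤ 4 t_k`. -/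
lemma tReal_succ_le (k : ℕ) : tReal (k + 1) ≤ 4 * tReal k := by
  have key : (k + 2) * catalan (k + 1) ≤ (k + 2) * (4 * catalan k) := by
    have h1 : (k + 2) * catalan (k + 1) = (k + 1 + 1) * catalan (k + 1) := by ring_nf
    have h2 : (k + 1) * ((k + 2) * catalan (k + 1)) = (k + 1) * Nat.centralBinom (k + 1) := by
      rw [h1, succ_mul_catalan_eq_centralBinom]
    rw [Nat.succ_mul_centralBinom_succ, ← succ_mul_catalan_eq_centralBinom] at h2
    -- h2 : (k+1) * ((k+2) * catalan (k+1)) = 2 * (2k+1) * ((k+1) * catalan k)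
    have h3 : (k + 2) * catalan (k + 1) = 2 * (2 * k + 1) * catalan k :=
      Nat.eq_of_mul_eq_mul_left (show 0 < k + 1 by omega) (by rw [h2]; ring)
    calc (k + 2) * catalan (k + 1) = 2 * (2 * k + 1) * catalan k := h3
      _ ≤ (k + 2) * (4 * catalan k) := by nlinarith [catalan k]
  have := Nat.le_of_mul_le_mul_left key (by omega)
  rw [tReal_eq_catalan, tReal_eq_catalan]
  exact_mod_cast this

/-- Catalan convolution. -/
lemma tReal_conv (n : ℕ) :
    ∑ p ∈ antidiagonal n, tReal p.1 * tReal p.2 = tReal (n + 1) := by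
  simp only [tReal_eq_catalan]
  rw [catalan_succ']
  push_cast
  rfl

/-- The forest counting function: number of `k`-tuples of trees with `n` edges total. -/
noncomputable def F (n k : ℕ) : ℝ :=
  ∑ l ∈ Finset.Nat.antidiagonalTuple k n, ∏ i, tReal (l i)

lemma F_nonneg (n k : ℕ) : 0 ≤ F n k :=
  Finset.sum_nonneg fun l _ => Finset.prod_nonneg fun i _ => tReal_nonneg _

lemma tcheck_eq_F (s d : ℕ) (hd : d ≠ 0) (hds : d ≤ s) : tcheck s d = F (s - d) d := by
  rw [tcheck, if_neg (by omega)]; rfl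

lemma F_one (n : ℕ) : F n 1 = tReal n := by
  rw [F, Finset.Nat.antidiagonalTuple_one, Finset.sum_singleton]
  simp

/-- Recursion: split off the first tree of the forest. -/
lemma F_succ (n k : ℕ) :
    F n (k + 1) = ∑ p ∈ antidiagonal n, tReal p.1 * F p.2 k := by
  rw [F]
  have : ∀ p : ℕ × ℕ, tReal p.1 * F p.2 k
      = ∑ l ∈ Finset.Nat.antidiagonalTuple k p.2, tReal p.1 * ∏ i, tReal (l i) := by
    intro p; rw [F, Finset.mul_sum]
  simp_rw [this]
  rw [Finset.sum_sigma']
  refine Finset.sum_nbij' (fun l => ⟨(l 0, ∑ i : Fin k, l i.succ), Fin.tail l⟩)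
    (fun x => Fin.cons x.1.1 x.2) ?_ ?_ ?_ ?_ ?_
  · intro l hl
    simp only [Finset.Nat.mem_antidiagonalTuple] at hl
    simp only [Finset.mem_sigma, Finset.HasAntidiagonal.mem_antidiagonal, Finset.Nat.mem_antidiagonalTuple]
    exact ⟨by rw [← hl, Fin.sum_univ_succ], rfl⟩
  · rintro ⟨p, l⟩ h
    simp only [Finset.mem_sigma, Finset.HasAntidiagonal.mem_antidiagonal, Finset.Nat.mem_antidiagonalTuple] at h ⊢
    rw [Fin.sum_cons, h.2, h.1]
  · intro l _
    exact Fin.cons_self_tail l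
  · rintro ⟨p, l⟩ h
    simp only [Finset.mem_sigma, Finset.HasAntidiagonal.mem_antidiagonal, Finset.Nat.mem_antidiagonalTuple] at h
    have h2 : ∑ i : Fin k, (Fin.cons p.1 l : Fin (k+1) → ℕ) i.succ = p.2 := by
      simp [h.2]
    ext i
    · simp
    · simp [h2, h.2]
    · simp [Fin.tail_cons]
  · intro l _
    rw [Fin.prod_univ_succ]
    rfl

lemma F_two (n : ℕ) : F n 2 = tReal (n + 1) := by
  rw [F_succ, ← tReal_conv n]
  exact Finset.sum_congr rfl fun p _ => by rw [F_one]

lemma F_three (n : ℕ) : F n 3 = tReal (n + 2) - tReal (n + 1) := by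
  have h : tReal (n + 2) = tReal (n + 1) * tReal 0
      + ∑ p ∈ antidiagonal n, tReal p.1 * tReal (p.2 + 1) := by
    rw [← tReal_conv (n + 1), Finset.Nat.sum_antidiagonal_succ'
      (f := fun p => tReal p.1 * tReal p.2)]
  rw [F_succ]
  have h2 : ∀ p ∈ antidiagonal n, tReal p.1 * F p.2 2 = tReal p.1 * tReal (p.2 + 1) :=
    fun p _ => by rw [F_two]
  rw [Finset.sum_congr rfl h2]
  rw [h, tReal_zero]
  ring

lemma F_step (D : ℕ) (hD : 2 ≤ D) : ∀ n : ℕ, F n (D + 1) ≤ (3 / 4 : ℝ) * F (n + 1) D := by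
  induction D, hD using Nat.le_induction with
  | base =>
    intro n
    rw [F_three, F_two]
    have := tReal_succ_le (n + 1)
    have h2 : n + 1 + 1 = n + 2 := rfl
    rw [h2] at this
    linarith
  | succ D hD ih =>
    intro n
    rw [F_succ]
    have step1 : ∑ p ∈ antidiagonal n, tReal p.1 * F p.2 (D + 1)
        ≤ ∑ p ∈ antidiagonal n, tReal p.1 * ((3 / 4 : ℝ) * F (p.2 + 1) D) := by
      refine Finset.sum_le_sum fun p _ => ?_
      exact mul_le_mul_of_nonneg_left (ih p.2) (tReal_nonneg _)
    have step2 : F (n + 1) (D + 1) = tReal (n + 1) * F 0 D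
        + ∑ p ∈ antidiagonal n, tReal p.1 * F (p.2 + 1) D := by
      rw [F_succ, Finset.Nat.sum_antidiagonal_succ' (f := fun p => tReal p.1 * F p.2 D)]
    have hnn : 0 ≤ tReal (n + 1) * F 0 D :=
      mul_nonneg (tReal_nonneg _) (F_nonneg _ _)
    have step3 : ∑ p ∈ antidiagonal n, tReal p.1 * F (p.2 + 1) D ≤ F (n + 1) (D + 1) := by
      rw [step2]; linarith
    calc ∑ p ∈ antidiagonal n, tReal p.1 * F p.2 (D + 1)
        ≤ ∑ p ∈ antidiagonal n, tReal p.1 * ((3 / 4 : ℝ) * F (p.2 + 1) D) := step1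
      _ = (3 / 4 : ℝ) * ∑ p ∈ antidiagonal n, tReal p.1 * F (p.2 + 1) D := by
          rw [Finset.mul_sum]; exact Finset.sum_congr rfl fun p _ => by ring
      _ ≤ (3 / 4 : ℝ) * F (n + 1) (D + 1) := by linarith [step3]

lemma F_iter (k : ℕ) : ∀ n : ℕ, F n (k + 3) ≤ (3 / 4 : ℝ) ^ k * F (n + k) 3 := by
  induction k with
  | zero => intro n; simp
  | succ k ih =>
    intro n
    have h1 : F n (k + 1 + 3) ≤ (3 / 4 : ℝ) * F (n + 1) (k + 3) := by
      have := F_step (k + 3) (by omega) n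
      convert this using 2 <;> omega
    calc F n (k + 1 + 3) ≤ (3 / 4 : ℝ) * F (n + 1) (k + 3) := h1
      _ ≤ (3 / 4 : ℝ) * ((3 / 4 : ℝ) ^ k * F (n + 1 + k) 3) := by
          have := ih (n + 1)
          nlinarith [F_nonneg (n + 1 + k) 3]
      _ = (3 / 4 : ℝ) ^ (k + 1) * F (n + (k + 1)) 3 := by
          rw [show n + 1 + k = n + (k + 1) by omega]; ring

/-- For `2 ≤ d ≤ s`,
`|𝒯_s^{(d)}| = Σ_{u+v=s−d} (2v+1)·t_v·ť_{u+d}^{(d)} ≤ (2s+1)·(3/4)^{d−2}·t_s`. -/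
theorem trees_with_large_degree_bound (d s : ℕ) (hd : 2 ≤ d) (hds : d ≤ s) :
    ∑ p ∈ Finset.HasAntidiagonal.antidiagonal (s - d),
        (2 * (p.2 : ℝ) + 1) * tReal p.2 * tcheck (p.1 + d) d ≤
      (2 * (s : ℝ) + 1) * (3 / 4 : ℝ) ^ (d - 2) * tReal s := by
  have hrw : ∀ p ∈ antidiagonal (s - d),
      (2 * (p.2 : ℝ) + 1) * tReal p.2 * tcheck (p.1 + d) d
        = (2 * (p.2 : ℝ) + 1) * tReal p.2 * F p.1 d := by
    intro p _
    rw [tcheck_eq_F (p.1 + d) d (by omega) (by omega), Nat.add_sub_cancel]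
  rw [Finset.sum_congr rfl hrw]
  have step1 : ∑ p ∈ antidiagonal (s - d), (2 * (p.2 : ℝ) + 1) * tReal p.2 * F p.1 d
      ≤ (2 * (s : ℝ) + 1) * ∑ p ∈ antidiagonal (s - d), tReal p.2 * F p.1 d := by
    rw [Finset.mul_sum]
    refine Finset.sum_le_sum fun p hp => ?_
    have hp2 : p.2 ≤ s := by
      have := Finset.HasAntidiagonal.mem_antidiagonal.mp hp; omega
    have h1 : (2 * (p.2 : ℝ) + 1) ≤ 2 * (s : ℝ) + 1 := by
      have : (p.2 : ℝ) ≤ (s : ℝ) := by exact_mod_cast hp2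
      linarith
    have h2 : (0 : ℝ) ≤ tReal p.2 * F p.1 d := mul_nonneg (tReal_nonneg _) (F_nonneg _ _)
    calc (2 * (p.2 : ℝ) + 1) * tReal p.2 * F p.1 d
        = (2 * (p.2 : ℝ) + 1) * (tReal p.2 * F p.1 d) := by ring
      _ ≤ (2 * (s : ℝ) + 1) * (tReal p.2 * F p.1 d) := mul_le_mul_of_nonneg_right h1 h2
  have hswap : ∑ p ∈ antidiagonal (s - d), tReal p.2 * F p.1 d
      = ∑ p ∈ antidiagonal (s - d), tReal p.1 * F p.2 d := by
    rw [← Finset.Nat.sum_antidiagonal_swap (f := fun p => tReal p.1 * F p.2 d)]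
    rfl
  have hF : ∑ p ∈ antidiagonal (s - d), tReal p.1 * F p.2 d = F (s - d) (d + 1) :=
    (F_succ (s - d) d).symm
  have hchain : F (s - d) (d + 1) ≤ (3 / 4 : ℝ) ^ (d - 2) * tReal s := by
    have h1 : F (s - d) (d + 1) ≤ (3 / 4 : ℝ) ^ (d - 2) * F (s - d + (d - 2)) 3 := by
      have h := F_iter (d - 2) (s - d)
      rwa [show d - 2 + 3 = d + 1 from by omega] at h
    have h2 : s - d + (d - 2) = s - 2 := by omega
    have h3 : F (s - 2) 3 ≤ tReal s := by
      rw [F_three, show s - 2 + 2 = s by omega]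
      have := tReal_nonneg (s - 2 + 1)
      linarith
    rw [h2] at h1
    have hpow : (0 : ℝ) ≤ (3 / 4 : ℝ) ^ (d - 2) := by positivity
    nlinarith
  calc ∑ p ∈ antidiagonal (s - d), (2 * (p.2 : ℝ) + 1) * tReal p.2 * F p.1 d
      ≤ (2 * (s : ℝ) + 1) * ∑ p ∈ antidiagonal (s - d), tReal p.2 * F p.1 d := step1
    _ = (2 * (s : ℝ) + 1) * F (s - d) (d + 1) := by rw [hswap, hF]
    _ ≤ (2 * (s : ℝ) + 1) * ((3 / 4 : ℝ) ^ (d - 2) * tReal s) := by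
        have hs : (0 : ℝ) ≤ 2 * (s : ℝ) + 1 := by positivity
        exact mul_le_mul_of_nonneg_left hchain hs
    _ = (2 * (s : ℝ) + 1) * (3 / 4 : ℝ) ^ (d - 2) * tReal s := by ring
end

section
/- For every integer s ≥ 2, Σ (2u+1) · t_u · t_{v₁} · t_{v₂} · t_{v₃} = t_s · (s − 3s/(s+2)) = t_s · s(s−1)/(s+2), where the sum is over all quadruples (u, v₁, v₂, v₃) of nonnegative integers with u + v₁ + v₂ + v₃ = s − 2. (This quantity equals the total number, over all plane rooted trees with s edges, of unordered pairs of distinct edges lying in the same exit cluster.) -/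
open Finset

/-- The Catalan numbers as real numbers. -/
noncomputable def cR (n : ℕ) : ℝ := (catalan n : ℝ)

lemma tReal_eq (k : ℕ) : tReal k = cR k := by
  have h1 : Nat.choose (2*k) k * Nat.factorial k * Nat.factorial k = Nat.factorial (2*k) := by
    have := Nat.choose_mul_factorial_mul_factorial
      (Nat.le_mul_of_pos_left k (by norm_num) : k ≤ 2*k)
    simpa [two_mul, Nat.add_sub_cancel] using this
  have h2 : (k + 1) * catalan k = Nat.centralBinom k := succ_mul_catalan_eq_centralBinom k
  have h2' : ((k:ℝ) + 1) * cR k = (Nat.choose (2*k) k : ℝ) := by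
    have := congrArg (Nat.cast (R := ℝ)) h2
    push_cast at this
    simpa [cR, Nat.centralBinom] using this
  have h1' : ((Nat.choose (2*k) k : ℝ)) * (Nat.factorial k : ℝ) * (Nat.factorial k : ℝ)
      = (Nat.factorial (2*k) : ℝ) := by exact_mod_cast congrArg (Nat.cast (R := ℝ)) h1
  have hfk : (Nat.factorial k : ℝ) ≠ 0 := Nat.cast_ne_zero.2 (Nat.factorial_ne_zero k)
  rw [tReal, Nat.factorial_succ]
  push_cast
  rw [← h1', ← h2']
  field_simp

lemma cR_zero : cR 0 = 1 := by simp [cR, catalan_zero]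

lemma cR_one : cR 1 = 1 := by simp [cR, catalan_one]

lemma cat_ratio (k : ℕ) : ((k:ℝ) + 2) * cR (k+1) = 2 * (2*(k:ℝ)+1) * cR k := by
  have h1 : (k + 2) * catalan (k+1) = Nat.centralBinom (k+1) := by
    simpa using succ_mul_catalan_eq_centralBinom (k+1)
  have h2 := Nat.succ_mul_centralBinom_succ k
  have h3 := succ_mul_catalan_eq_centralBinom k
  have h4 : (k+1) * ((k+2) * catalan (k+1)) = (k+1) * (2 * (2*k+1) * catalan k) := by
    rw [h1]
    calc (k+1) * Nat.centralBinom (k+1) = 2*(2*k+1) * Nat.centralBinom k := h2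
    _ = 2*(2*k+1) * ((k+1) * catalan k) := by rw [h3]
    _ = (k+1) * (2 * (2*k+1) * catalan k) := by ring
  have h5 : (k+2) * catalan (k+1) = 2 * (2*k+1) * catalan k :=
    Nat.eq_of_mul_eq_mul_left (Nat.succ_pos k) h4
  have := congrArg (Nat.cast (R := ℝ)) h5
  push_cast at this
  simp only [cR]
  linarith [this]

lemma sum_adt_succ {k n : ℕ} (f : (Fin (k+1) → ℕ) → ℝ) :
    ∑ l ∈ Finset.Nat.antidiagonalTuple (k+1) n, f l =
    ∑ p ∈ Finset.HasAntidiagonal.antidiagonal n,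
      ∑ x ∈ Finset.Nat.antidiagonalTuple k p.2, f (Fin.cons p.1 x) := by
  rw [show (∑ p ∈ Finset.HasAntidiagonal.antidiagonal n, ∑ x ∈ Finset.Nat.antidiagonalTuple k p.2,
        f (Fin.cons p.1 x)) = ∑ q ∈ (Finset.HasAntidiagonal.antidiagonal n).sigma
          (fun p => Finset.Nat.antidiagonalTuple k p.2), f (Fin.cons q.1.1 q.2) from
    (Finset.sum_sigma _ _ (fun q : Σ _ : ℕ × ℕ, (Fin k → ℕ) => f (Fin.cons q.1.1 q.2))).symm]
  refine Finset.sum_nbij' (i := fun l => ⟨(l 0, ∑ i, Fin.tail l i), Fin.tail l⟩)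
    (j := fun q => Fin.cons q.1.1 q.2) ?_ ?_ ?_ ?_ ?_
  · intro l hl
    rw [Finset.Nat.mem_antidiagonalTuple] at hl
    simp only [Finset.mem_sigma, Finset.HasAntidiagonal.mem_antidiagonal, Finset.Nat.mem_antidiagonalTuple]
    constructor
    · rw [← hl, Fin.sum_univ_succ]
      rfl
    · trivial
  · intro q hq
    simp only [Finset.mem_sigma, Finset.HasAntidiagonal.mem_antidiagonal,
      Finset.Nat.mem_antidiagonalTuple] at hq ⊢
    rw [Fin.sum_cons, hq.2, hq.1]
  · intro l _
    exact Fin.cons_self_tail l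
  · intro q hq
    simp only [Finset.mem_sigma, Finset.HasAntidiagonal.mem_antidiagonal,
      Finset.Nat.mem_antidiagonalTuple] at hq
    refine Sigma.ext ?_ (heq_of_eq ?_)
    · simp [hq.2]
    · simp
  · intro l _
    rw [Fin.cons_self_tail]

lemma sum_adt4 (n : ℕ) (f : (Fin 4 → ℕ) → ℝ) :
    ∑ l ∈ Finset.Nat.antidiagonalTuple 4 n, f l =
    ∑ p ∈ Finset.HasAntidiagonal.antidiagonal n,
      ∑ x ∈ Finset.Nat.antidiagonalTuple 3 p.2, f (Fin.cons p.1 x) := sum_adt_succ f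

lemma sum_adt3 (n : ℕ) (f : (Fin 3 → ℕ) → ℝ) :
    ∑ l ∈ Finset.Nat.antidiagonalTuple 3 n, f l =
    ∑ p ∈ Finset.HasAntidiagonal.antidiagonal n,
      ∑ x ∈ Finset.Nat.antidiagonalTuple 2 p.2, f (Fin.cons p.1 x) := sum_adt_succ f

lemma sum_adt2 (n : ℕ) (f : (Fin 2 → ℕ) → ℝ) :
    ∑ l ∈ Finset.Nat.antidiagonalTuple 2 n, f l =
    ∑ p ∈ Finset.HasAntidiagonal.antidiagonal n,
      ∑ x ∈ Finset.Nat.antidiagonalTuple 1 p.2, f (Fin.cons p.1 x) := sum_adt_succ f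

lemma cR_D2 (n : ℕ) : ∑ p ∈ Finset.HasAntidiagonal.antidiagonal n, cR p.1 * cR p.2 = cR (n+1) := by
  simp only [cR]
  rw [catalan_succ']
  push_cast
  rfl

lemma cR_D2r (n : ℕ) : ∑ i ∈ Finset.range (n+1), cR i * cR (n-i) = cR (n+1) := by
  rw [← cR_D2 n, Finset.Nat.sum_antidiagonal_eq_sum_range_succ (fun a b => cR a * cR b)]

lemma cR_E (n : ℕ) :
    ∑ i ∈ Finset.range (n+1), (2*(i:ℝ)+1) * cR i * cR (n-i) = ((n:ℝ)+1) * cR (n+1) := by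
  set g : ℕ → ℝ := fun i => (2*(i:ℝ)+1) * cR i * cR (n-i) with hg
  have hrefl : ∑ i ∈ Finset.range (n+1), g i = ∑ i ∈ Finset.range (n+1), g (n - i) := by
    have := Finset.sum_range_reflect g (n+1)
    simpa using this.symm
  have h2S : (∑ i ∈ Finset.range (n+1), g i) + (∑ i ∈ Finset.range (n+1), g i)
      = ∑ i ∈ Finset.range (n+1), (2*(n:ℝ)+2) * (cR i * cR (n-i)) := by
    nth_rewrite 2 [hrefl]
    rw [← Finset.sum_add_distrib]
    apply Finset.sum_congr rfl
    intro i hi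
    rw [Finset.mem_range] at hi
    have hi' : i ≤ n := Nat.lt_succ_iff.mp hi
    have h1 : n - (n - i) = i := by omega
    have h2 : ((n - i : ℕ) : ℝ) = (n:ℝ) - (i:ℝ) := by
      rw [Nat.cast_sub hi']
    simp only [hg, h1, h2]
    ring
  rw [← Finset.mul_sum, cR_D2r] at h2S
  linarith [h2S]

lemma cR_T3 (m : ℕ) :
    ∑ x ∈ Finset.Nat.antidiagonalTuple 3 m, cR (x 0) * cR (x 1) * cR (x 2)
      = cR (m+2) - cR (m+1) := by
  have step1 : ∀ r : ℕ, ∑ x ∈ Finset.Nat.antidiagonalTuple 2 r, cR (x 0) * cR (x 1)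
      = cR (r+1) := by
    intro r
    rw [sum_adt2]
    simp only [Finset.Nat.antidiagonalTuple_one, Finset.sum_singleton]
    exact cR_D2 r
  rw [sum_adt3]
  have hin : ∀ p : ℕ × ℕ, ∑ x ∈ Finset.Nat.antidiagonalTuple 2 p.2,
      cR ((Fin.cons p.1 x : Fin 3 → ℕ) 0) * cR ((Fin.cons p.1 x : Fin 3 → ℕ) 1)
        * cR ((Fin.cons p.1 x : Fin 3 → ℕ) 2) = cR p.1 * cR (p.2+1) := by
    intro p
    have hx : ∀ x : Fin 2 → ℕ, cR ((Fin.cons p.1 x : Fin 3 → ℕ) 0)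
        * cR ((Fin.cons p.1 x : Fin 3 → ℕ) 1) * cR ((Fin.cons p.1 x : Fin 3 → ℕ) 2)
        = cR p.1 * (cR (x 0) * cR (x 1)) := by
      intro x
      show cR p.1 * cR (x 0) * cR (x 1) = _
      ring
    rw [Finset.sum_congr rfl (fun x _ => hx x), ← Finset.mul_sum, step1]
  rw [Finset.sum_congr rfl (fun p _ => hin p),
    Finset.Nat.sum_antidiagonal_eq_sum_range_succ (fun a b => cR a * cR (b+1))]
  have hs := cR_D2r (m+1)
  rw [Finset.sum_range_succ] at hs
  simp only [Nat.sub_self, cR_zero, mul_one] at hs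
  have hidx : ∑ i ∈ Finset.range (m+1), cR i * cR (m - i + 1)
      = ∑ i ∈ Finset.range (m+1), cR i * cR (m + 1 - i) := by
    apply Finset.sum_congr rfl
    intro i hi
    rw [Finset.mem_range] at hi
    congr 2
    omega
  rw [hidx]
  linarith [hs]

/-- For `s ≥ 2`,
`Σ_{u+v₁+v₂+v₃=s−2} (2u+1)·t_u·t_{v₁}·t_{v₂}·t_{v₃} = t_s·(s − 3s/(s+2)) = t_s·s(s−1)/(s+2)`. -/
theorem marked_pairs_count (s : ℕ) (hs : 2 ≤ s) :
    (∑ l ∈ Finset.Nat.antidiagonalTuple 4 (s - 2),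
        (2 * (l 0 : ℝ) + 1) * tReal (l 0) * tReal (l 1) * tReal (l 2) * tReal (l 3)) =
      tReal s * ((s : ℝ) - 3 * (s : ℝ) / ((s : ℝ) + 2)) ∧
    (∑ l ∈ Finset.Nat.antidiagonalTuple 4 (s - 2),
        (2 * (l 0 : ℝ) + 1) * tReal (l 0) * tReal (l 1) * tReal (l 2) * tReal (l 3)) =
      tReal s * ((s : ℝ) * ((s : ℝ) - 1) / ((s : ℝ) + 2)) := by
  obtain ⟨n, rfl⟩ : ∃ n, s = n + 2 := ⟨s - 2, by omega⟩
  have hn4 : ((n:ℝ) + 4) ≠ 0 := by positivity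
  have hkey : (∑ l ∈ Finset.Nat.antidiagonalTuple 4 (n + 2 - 2),
      (2 * (l 0 : ℝ) + 1) * tReal (l 0) * tReal (l 1) * tReal (l 2) * tReal (l 3))
      = cR (n+2) * (((n:ℝ)+2) * ((n:ℝ)+1)) / ((n:ℝ)+4) := by
    have hred : n + 2 - 2 = n := by omega
    rw [hred]
    simp only [tReal_eq]
    rw [sum_adt4]
    have hin : ∀ p : ℕ × ℕ, ∑ x ∈ Finset.Nat.antidiagonalTuple 3 p.2,
        (2 * (((Fin.cons p.1 x : Fin 4 → ℕ) 0 : ℕ) : ℝ) + 1)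
          * cR ((Fin.cons p.1 x : Fin 4 → ℕ) 0) * cR ((Fin.cons p.1 x : Fin 4 → ℕ) 1)
          * cR ((Fin.cons p.1 x : Fin 4 → ℕ) 2) * cR ((Fin.cons p.1 x : Fin 4 → ℕ) 3)
        = (2 * (p.1 : ℝ) + 1) * cR p.1 * (cR (p.2+2) - cR (p.2+1)) := by
      intro p
      have hx : ∀ x : Fin 3 → ℕ, (2 * (((Fin.cons p.1 x : Fin 4 → ℕ) 0 : ℕ) : ℝ) + 1)
          * cR ((Fin.cons p.1 x : Fin 4 → ℕ) 0) * cR ((Fin.cons p.1 x : Fin 4 → ℕ) 1)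
          * cR ((Fin.cons p.1 x : Fin 4 → ℕ) 2) * cR ((Fin.cons p.1 x : Fin 4 → ℕ) 3)
          = ((2 * (p.1 : ℝ) + 1) * cR p.1) * (cR (x 0) * cR (x 1) * cR (x 2)) := by
        intro x
        show (2 * (p.1 : ℝ) + 1) * cR p.1 * cR (x 0) * cR (x 1) * cR (x 2) = _
        ring
      rw [Finset.sum_congr rfl (fun x _ => hx x), ← Finset.mul_sum, cR_T3]
    rw [Finset.sum_congr rfl (fun p _ => hin p),
      Finset.Nat.sum_antidiagonal_eq_sum_range_succ
        (fun a b => (2 * (a : ℝ) + 1) * cR a * (cR (b+2) - cR (b+1)))]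
    have expand : ∑ u ∈ Finset.range (n+1),
        (2 * (u : ℝ) + 1) * cR u * (cR (n-u+2) - cR (n-u+1))
        = (∑ u ∈ Finset.range (n+1), (2 * (u : ℝ) + 1) * cR u * cR (n-u+2))
          - (∑ u ∈ Finset.range (n+1), (2 * (u : ℝ) + 1) * cR u * cR (n-u+1)) := by
      rw [← Finset.sum_sub_distrib]
      apply Finset.sum_congr rfl
      intros
      ring
    rw [expand]
    -- compute B
    have hB := cR_E (n+1)
    rw [Finset.sum_range_succ] at hB
    simp only [Nat.sub_self, cR_zero, mul_one] at hB
    have hBidx : ∑ i ∈ Finset.range (n+1), (2*(i:ℝ)+1) * cR i * cR (n + 1 - i)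
        = ∑ i ∈ Finset.range (n+1), (2*(i:ℝ)+1) * cR i * cR (n - i + 1) := by
      apply Finset.sum_congr rfl
      intro i hi
      rw [Finset.mem_range] at hi
      congr 2
      omega
    rw [hBidx] at hB
    push_cast at hB
    -- compute A
    have hA := cR_E (n+2)
    rw [Finset.sum_range_succ, Finset.sum_range_succ] at hA
    simp only [Nat.sub_self, cR_zero, mul_one, show n + 2 - (n+1) = 1 from by omega, cR_one] at hA
    have hAidx : ∑ i ∈ Finset.range (n+1), (2*(i:ℝ)+1) * cR i * cR (n + 2 - i)
        = ∑ i ∈ Finset.range (n+1), (2*(i:ℝ)+1) * cR i * cR (n - i + 2) := by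
      apply Finset.sum_congr rfl
      intro i hi
      rw [Finset.mem_range] at hi
      congr 2
      omega
    rw [hAidx] at hA
    push_cast at hA
    have hrat := cat_ratio (n+2)
    push_cast at hrat
    have h1 : cR (n+1+1+1) = cR (n+3) := by norm_num
    have h2 : cR (n+2+1) = cR (n+3) := by norm_num
    rw [h1] at hA
    rw [h2] at hrat
    have h3 : cR (n+1+1) = cR (n+2) := by norm_num
    rw [h3] at hB
    field_simp
    linear_combination ((n:ℝ)+4) * hA - ((n:ℝ)+4) * hB + ((n:ℝ)+3) * hrat
  constructor
  · rw [hkey, tReal_eq]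
    push_cast
    field_simp
    ring
  · rw [hkey, tReal_eq]
    push_cast
    field_simp
    ring
end

section
/- For all integers m ≥ 1 and s ≥ m, the quantity N_s^{(m)} = Σ (2u+1) · t_u · t_{v₁}⋯t_{v_{2m−1}}, where the sum is over all tuples (u, v₁, …, v_{2m−1}) of nonnegative integers with u + v₁ + ⋯ + v_{2m−1} = s − m, satisfies N_s^{(m)} ≤ 2^m · s · t_s. (N_s^{(m)} is the total number, over all plane rooted trees with s edges, of ways to mark m distinct edges from the same exit cluster.) -/
namespace MarkedAux

open PowerSeries Finset

lemma tReal_eq_catalan (k : ℕ) : tReal k = (catalan k : ℝ) := by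
  have h1 : (k + 1) * catalan k = Nat.centralBinom k := succ_mul_catalan_eq_centralBinom k
  have h2 : Nat.centralBinom k * (k.factorial * k.factorial) = (2 * k).factorial := by
    rw [Nat.centralBinom]
    have := Nat.choose_mul_factorial_mul_factorial (show k ≤ 2 * k by omega)
    simpa [two_mul, mul_assoc, show 2 * k - k = k by omega] using this
  have h3 : catalan k * (k.factorial * (k + 1).factorial) = (2 * k).factorial := by
    rw [Nat.factorial_succ]
    calc catalan k * (k.factorial * ((k + 1) * k.factorial))
        = ((k + 1) * catalan k) * (k.factorial * k.factorial) := by ring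
      _ = (2 * k).factorial := by rw [h1, h2]
  have hk : ((k.factorial : ℝ) * ((k + 1).factorial : ℝ)) ≠ 0 := by
    positivity
  rw [tReal, div_eq_iff hk]
  exact_mod_cast h3.symm

lemma tReal_nonneg (k : ℕ) : 0 ≤ tReal k := by
  rw [tReal_eq_catalan]; positivity

/-- ratio identity `(n+2) t_{n+1} = 2 (2n+1) t_n`. -/
lemma tReal_ratio (n : ℕ) :
    ((n : ℝ) + 2) * tReal (n + 1) = 2 * (2 * (n : ℝ) + 1) * tReal n := by
  have e1 : 2 * (n + 1) = (2 * n + 1) + 1 := by ring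
  rw [tReal, tReal, e1, Nat.factorial_succ, Nat.factorial_succ (2 * n),
    Nat.factorial_succ (n + 1), Nat.factorial_succ n]
  have h0 : (0:ℝ) < (Nat.factorial n : ℝ) := by exact_mod_cast n.factorial_pos
  have h1 : (0:ℝ) < (Nat.factorial (n+1) : ℝ) := by exact_mod_cast (n+1).factorial_pos
  field_simp
  push_cast
  ring

/-- The Catalan generating function as a formal power series. -/
noncomputable def c : PowerSeries ℝ := PowerSeries.mk tReal

/-- `A(x) = Σ (2n+1) t_n x^n`. -/
noncomputable def a : PowerSeries ℝ := PowerSeries.mk fun n => (2 * (n : ℝ) + 1) * tReal n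

lemma hc : X * c ^ 2 = c - 1 := by
  ext n
  cases n with
  | zero =>
      simp [c, coeff_zero_eq_constantCoeff, tReal]
  | succ n =>
      rw [coeff_succ_X_mul, sq, coeff_mul, map_sub, coeff_one, if_neg n.succ_ne_zero, sub_zero]
      simp only [c, coeff_mk]
      have := catalan_succ' n
      have : ((catalan (n+1) : ℕ) : ℝ)
          = ∑ ij ∈ antidiagonal n, ((catalan ij.1 * catalan ij.2 : ℕ) : ℝ) := by
        exact_mod_cast congrArg (Nat.cast : ℕ → ℝ) this
      rw [tReal_eq_catalan]
      rw [this]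
      refine Finset.sum_congr rfl fun p _ => ?_
      push_cast
      rw [tReal_eq_catalan, tReal_eq_catalan]

lemma coeff_c_sq (n : ℕ) : (coeff n) (c ^ 2) = tReal (n + 1) := by
  rw [← coeff_succ_X_mul, hc, map_sub, coeff_one, if_neg n.succ_ne_zero, sub_zero]
  simp [c]

lemma coeff_ac (n : ℕ) : (coeff n) (a * c) = ((n : ℝ) + 1) * tReal (n + 1) := by
  rw [coeff_mul]
  have hswap :
      ∑ p ∈ antidiagonal n, (coeff p.1) a * (coeff p.2) c
        = ∑ p ∈ antidiagonal n, (2 * (p.2 : ℝ) + 1) * tReal p.2 * tReal p.1 := by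
    calc ∑ p ∈ antidiagonal n, (coeff p.1) a * (coeff p.2) c
        = ∑ p ∈ antidiagonal n,
            (fun q : ℕ × ℕ => (2 * (q.1 : ℝ) + 1) * tReal q.1 * tReal q.2) p := by
          refine Finset.sum_congr rfl fun p _ => ?_
          simp [a, c]
      _ = ∑ p ∈ antidiagonal n,
            (fun q : ℕ × ℕ => (2 * (q.1 : ℝ) + 1) * tReal q.1 * tReal q.2) p.swap :=
          Finset.Nat.sum_antidiagonal_swap.symm
      _ = ∑ p ∈ antidiagonal n, (2 * (p.2 : ℝ) + 1) * tReal p.2 * tReal p.1 := rfl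
  have key : (2 : ℝ) * ∑ p ∈ antidiagonal n, (coeff p.1) a * (coeff p.2) c
      = (2 * (n : ℝ) + 2) * tReal (n + 1) := by
    calc (2 : ℝ) * ∑ p ∈ antidiagonal n, (coeff p.1) a * (coeff p.2) c
        = ∑ p ∈ antidiagonal n, ((2 * (p.1 : ℝ) + 1) * tReal p.1 * tReal p.2
            + (2 * (p.2 : ℝ) + 1) * tReal p.2 * tReal p.1) := by
          rw [Finset.sum_add_distrib, ← hswap, two_mul]
          congr 1
          refine Finset.sum_congr rfl fun p _ => ?_
          simp [a, c]
      _ = ∑ p ∈ antidiagonal n, (2 * (n : ℝ) + 2) * (tReal p.1 * tReal p.2) := by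
          refine Finset.sum_congr rfl fun p hp => ?_
          have hp' : p.1 + p.2 = n := Finset.HasAntidiagonal.mem_antidiagonal.mp hp
          have h : (p.1 : ℝ) + (p.2 : ℝ) = (n : ℝ) := by exact_mod_cast hp'
          linear_combination (2 * tReal p.1 * tReal p.2) * h
      _ = (2 * (n : ℝ) + 2) * ∑ p ∈ antidiagonal n, tReal p.1 * tReal p.2 := by
          rw [Finset.mul_sum]
      _ = (2 * (n : ℝ) + 2) * tReal (n + 1) := by
          congr 1
          have := coeff_c_sq n
          rw [sq, coeff_mul] at this
          simpa [c] using this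
  linarith [key]

lemma ha : a * (2 - c) = c ^ 2 := by
  ext n
  rw [mul_sub, map_sub, coeff_c_sq]
  have h2 : (coeff n) (a * 2) = 2 * ((2 * (n : ℝ) + 1) * tReal n) := by
    rw [mul_two, map_add]
    simp [a]; ring
  rw [h2, coeff_ac]
  have := tReal_ratio n
  linarith

lemma acsucc (r : ℕ) : a * c ^ (r + 1) = 2 * (a * c ^ r) - c ^ (r + 2) := by
  have h : a * c = 2 * a - c ^ 2 := by linear_combination -ha
  calc a * c ^ (r + 1) = (a * c) * c ^ r := by ring
    _ = (2 * a - c ^ 2) * c ^ r := by rw [h]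
    _ = 2 * (a * c ^ r) - c ^ (r + 2) := by ring

/-- Splitting the first coordinate of an antidiagonal tuple. -/
lemma tuple_succ (f : ℕ → ℝ) (k n : ℕ) :
    ∑ l ∈ Finset.Nat.antidiagonalTuple (k + 1) n, ∏ i, f (l i)
      = ∑ p ∈ antidiagonal n, f p.1 *
          ∑ l ∈ Finset.Nat.antidiagonalTuple k p.2, ∏ i, f (l i) := by
  simp_rw [Finset.mul_sum]
  rw [Finset.sum_sigma']
  refine Finset.sum_bij'
    (fun (l : Fin (k + 1) → ℕ) (_ : l ∈ Finset.Nat.antidiagonalTuple (k + 1) n) =>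
      (⟨(l 0, ∑ i : Fin k, l i.succ), Fin.tail l⟩ : Σ _ : ℕ × ℕ, Fin k → ℕ))
    (fun x _ => Fin.cons x.1.1 x.2) ?_ ?_ ?_ ?_ ?_
  · intro l hl
    simp only [Finset.Nat.mem_antidiagonalTuple] at hl
    simp only [Finset.mem_sigma, Finset.HasAntidiagonal.mem_antidiagonal,
      Finset.Nat.mem_antidiagonalTuple]
    constructor
    · rw [← hl, Fin.sum_univ_succ]
    · rfl
  · rintro ⟨⟨p1, p2⟩, l⟩ hx
    simp only [Finset.mem_sigma, Finset.HasAntidiagonal.mem_antidiagonal,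
      Finset.Nat.mem_antidiagonalTuple] at hx ⊢
    rw [Fin.sum_cons, hx.2]
    exact hx.1
  · intro l hl
    exact Fin.cons_self_tail l
  · rintro ⟨⟨p1, p2⟩, l⟩ hx
    simp only [Finset.mem_sigma, Finset.HasAntidiagonal.mem_antidiagonal,
      Finset.Nat.mem_antidiagonalTuple] at hx
    simp only [Fin.cons_zero, Fin.cons_succ, Fin.tail_cons]
    rw [hx.2]
  · intro l hl
    rw [Fin.prod_univ_succ]
    rfl

lemma S_eq (k n : ℕ) :
    ∑ l ∈ Finset.Nat.antidiagonalTuple k n, ∏ i, tReal (l i) = (coeff n) (c ^ k) := by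
  induction k generalizing n with
  | zero =>
      cases n with
      | zero => simp [Finset.Nat.antidiagonalTuple_zero_zero]
      | succ n => simp [Finset.Nat.antidiagonalTuple_zero_succ, coeff_one]
  | succ k ih =>
      rw [tuple_succ, pow_succ']
      rw [coeff_mul]
      refine Finset.sum_congr rfl fun p _ => ?_
      rw [ih p.2]
      simp [c]

lemma coeff_c_pow_nonneg (k n : ℕ) : 0 ≤ (coeff n) (c ^ k) := by
  rw [← S_eq]
  exact Finset.sum_nonneg fun l _ => Finset.prod_nonneg fun i _ => tReal_nonneg _

lemma step (r n : ℕ) : (coeff n) (a * c ^ (r + 2)) ≤ (coeff (n + 1)) (a * c ^ r) := by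
  have h1 : X * (a * c ^ (r + 2)) = a * c ^ r - c ^ (r + 2) := by
    calc X * (a * c ^ (r + 2)) = (a * c ^ r) * (X * c ^ 2) := by ring
      _ = (a * c ^ r) * (c - 1) := by rw [hc]
      _ = a * c ^ (r + 1) - a * c ^ r := by ring
      _ = (2 * (a * c ^ r) - c ^ (r + 2)) - a * c ^ r := by rw [acsucc r]
      _ = a * c ^ r - c ^ (r + 2) := by ring
  have h2 : (coeff n) (a * c ^ (r + 2)) = (coeff (n + 1)) (X * (a * c ^ (r + 2))) :=
    (coeff_succ_X_mul n _).symm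
  rw [h2, h1, map_sub]
  have := coeff_c_pow_nonneg (r + 2) (n + 1)
  linarith

lemma bound (s m : ℕ) (hm : 1 ≤ m) (hs : m ≤ s) :
    (coeff (s - m)) (a * c ^ (2 * m - 1)) ≤ (s : ℝ) * tReal s := by
  induction m, hm using Nat.le_induction with
  | base =>
      have h1 : 2 * 1 - 1 = 1 := rfl
      rw [h1, pow_one, coeff_ac]
      have hs' : s - 1 + 1 = s := Nat.succ_pred_eq_of_pos hs
      rw [hs']
      have : ((s - 1 : ℕ) : ℝ) + 1 = (s : ℝ) := by
        have : ((s - 1 : ℕ) : ℝ) = (s : ℝ) - 1 := by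
          push_cast [Nat.cast_sub hs]; ring
        rw [this]; ring
      rw [this]
  | succ m hm ih =>
      have hms : m ≤ s := Nat.le_of_succ_le hs
      have e1 : 2 * (m + 1) - 1 = (2 * m - 1) + 2 := by omega
      have e2 : s - (m + 1) + 1 = s - m := by omega
      calc (coeff (s - (m + 1))) (a * c ^ (2 * (m + 1) - 1))
          ≤ (coeff (s - (m + 1) + 1)) (a * c ^ (2 * m - 1)) := by
            rw [e1]; exact step _ _
        _ = (coeff (s - m)) (a * c ^ (2 * m - 1)) := by rw [e2]
        _ ≤ (s : ℝ) * tReal s := ih hms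

end MarkedAux

/-- For `1 ≤ m ≤ s`,
`N_s^{(m)} = Σ_{u+v₁+⋯+v_{2m−1}=s−m} (2u+1)·t_u·t_{v₁}⋯t_{v_{2m−1}} ≤ 2^m · s · t_s`. -/
theorem marked_m_tuples_bound (m s : ℕ) (hm : 1 ≤ m) (hs : m ≤ s) :
    ∑ p ∈ Finset.HasAntidiagonal.antidiagonal (s - m),
        (2 * (p.1 : ℝ) + 1) * tReal p.1 *
          ∑ l ∈ Finset.Nat.antidiagonalTuple (2 * m - 1) p.2, ∏ i, tReal (l i) ≤
      2 ^ m * (s : ℝ) * tReal s := by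
  open MarkedAux PowerSeries in
  have hLHS : ∑ p ∈ Finset.HasAntidiagonal.antidiagonal (s - m),
        (2 * (p.1 : ℝ) + 1) * tReal p.1 *
          ∑ l ∈ Finset.Nat.antidiagonalTuple (2 * m - 1) p.2, ∏ i, tReal (l i)
      = (coeff (s - m)) (MarkedAux.a * MarkedAux.c ^ (2 * m - 1)) := by
    rw [coeff_mul]
    refine Finset.sum_congr rfl fun p _ => ?_
    rw [S_eq]
    simp [MarkedAux.a]
  rw [hLHS]
  have h1 := MarkedAux.bound s m hm hs
  have h2 : (s : ℝ) * tReal s ≤ 2 ^ m * (s : ℝ) * tReal s := by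
    have hst : 0 ≤ (s : ℝ) * tReal s := mul_nonneg (by positivity) (MarkedAux.tReal_nonneg s)
    have : (1 : ℝ) ≤ 2 ^ m := one_le_pow₀ (by norm_num : (1:ℝ) ≤ 2)
    nlinarith
  linarith
end

section
/- Let w be a closed even walk of length 2s on a set V with no loops, and let β ∈ V with β ≠ w(0). Then: (i) the number of marked steps t with w(t) = β equals the number of non-marked steps t with w(t−1) = β, and (ii) the number of non-marked steps t with w(t) = β equals the number of marked steps t with w(t−1) = β. -/
open scoped Classical

/-- The unordered edge traversed by step `t` of the walk `w`, i.e. `{w(t−1), w(t)}`. -/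
def edgeAt {V : Type*} (w : ℕ → V) (t : ℕ) : Sym2 V := s(w (t - 1), w t)

/-- Step `t` of the walk `w` is *marked* if the number of steps `t' ∈ {1, …, t}` traversing
the same unordered edge as step `t` is odd. -/
def IsMarked {V : Type*} (w : ℕ → V) (t : ℕ) : Prop :=
  Odd ((Finset.Icc 1 t).filter (fun t' => edgeAt w t' = edgeAt w t)).card

lemma aux_odd_even_card (n : ℕ) (hn : Even n) :
    ((Finset.Icc 1 n).filter (fun t => Odd t)).card
      = ((Finset.Icc 1 n).filter (fun t => ¬ Odd t)).card := by
  refine Finset.card_bij' (fun t _ => t + 1) (fun t _ => t - 1) ?_ ?_ ?_ ?_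
  · intro a ha
    simp only [Finset.mem_filter, Finset.mem_Icc] at ha ⊢
    obtain ⟨⟨h1, h2⟩, hodd⟩ := ha
    have : a ≠ n := by rintro rfl; exact (Nat.not_even_iff_odd.2 hodd) hn
    refine ⟨⟨by omega, by omega⟩, by simp [Nat.odd_add_one, hodd]⟩
  · intro a ha
    simp only [Finset.mem_filter, Finset.mem_Icc, Nat.not_odd_iff_even] at ha ⊢
    obtain ⟨⟨h1, h2⟩, heven⟩ := ha
    have h2' : 2 ≤ a := by
      rcases Nat.eq_or_lt_of_le h1 with h | h
      · exfalso; rw [← h] at heven; simp at heven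
      · omega
    refine ⟨⟨by omega, by omega⟩, ?_⟩
    rcases heven with ⟨k, hk⟩
    exact ⟨k - 1, by omega⟩
  · intro a ha; show a + 1 - 1 = a; omega
  · intro a ha
    simp only [Finset.mem_filter, Finset.mem_Icc, Nat.not_odd_iff_even] at ha
    show a - 1 + 1 = a
    omega

lemma rank_marked_half (S : Finset ℕ) (hS : Even S.card) :
    (S.filter fun t => Odd ((S.filter (· ≤ t)).card)).card
      = (S.filter fun t => ¬ Odd ((S.filter (· ≤ t)).card)).card := by
  set r : ℕ → ℕ := fun t => (S.filter (· ≤ t)).card with hr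
  have hmono : ∀ t ∈ S, ∀ t' ∈ S, t < t' → r t < r t' := by
    intro t ht t' ht' h
    apply Finset.card_lt_card
    have hsub : S.filter (· ≤ t) ⊆ S.filter (· ≤ t') := by
      intro x hx
      simp only [Finset.mem_filter] at hx ⊢
      exact ⟨hx.1, hx.2.trans h.le⟩
    refine (Finset.ssubset_iff_of_subset hsub).2 ⟨t', ?_, ?_⟩
    · simp [ht']
    · simp [not_le.2 h]
  have hinj : Set.InjOn r S := by
    intro a ha b hb hab
    by_contra hne
    rcases lt_or_gt_of_ne hne with h | h
    · exact absurd hab (hmono a ha b hb h).ne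
    · exact absurd hab.symm (hmono b hb a ha h).ne
  have himg : S.image r = Finset.Icc 1 S.card := by
    apply Finset.eq_of_subset_of_card_le
    · intro x hx
      simp only [Finset.mem_image] at hx
      obtain ⟨t, ht, rfl⟩ := hx
      simp only [Finset.mem_Icc]
      constructor
      · have : t ∈ S.filter (· ≤ t) := by simp [ht]
        exact Finset.card_pos.2 ⟨t, this⟩
      · exact Finset.card_le_card (Finset.filter_subset _ _)
    · rw [Nat.card_Icc, Finset.card_image_of_injOn hinj]
      omega
  have key : ∀ p : ℕ → Prop, (S.filter fun t => p (r t)).card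
      = ((Finset.Icc 1 S.card).filter p).card := by
    intro p
    apply Finset.card_bij (fun t _ => r t)
    · intro a ha
      simp only [Finset.mem_filter] at ha ⊢
      refine ⟨?_, ha.2⟩
      rw [← himg]
      exact Finset.mem_image_of_mem r ha.1
    · intro a ha b hb hab
      exact hinj (Finset.mem_of_mem_filter _ ha) (Finset.mem_of_mem_filter _ hb) hab
    · intro b hb
      simp only [Finset.mem_filter] at hb
      have : b ∈ S.image r := by rw [himg]; exact hb.1
      simp only [Finset.mem_image] at this
      obtain ⟨t, ht, rfl⟩ := this
      exact ⟨t, by simp [Finset.mem_filter, ht, hb.2], rfl⟩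
  have h1 := key (fun n => Odd n)
  have h2 := key (fun n => ¬ Odd n)
  simp only [hr] at h1 h2
  have ha := aux_odd_even_card S.card hS
  try simp only [Finset.filter_congr_decidable] at h1 h2 ha ⊢
  refine Eq.trans ?_ (Eq.trans ha ?_)
  · convert h1 using 3
  · convert h2.symm using 3

lemma arrivals_eq_exits {V : Type*} (s : ℕ) (hs : 1 ≤ s) (w : ℕ → V)
    (hclosed : w 0 = w (2 * s)) (β : V) (hβ : β ≠ w 0) :
    ((Finset.Icc 1 (2 * s)).filter fun t => w t = β).card
      = ((Finset.Icc 1 (2 * s)).filter fun t => w (t - 1) = β).card := by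
  have h1 : (Finset.Icc 1 (2 * s)).filter (fun t => w t = β)
      = (Finset.Icc 1 (2 * s - 1)).filter (fun t => w t = β) := by
    ext t
    simp only [Finset.mem_filter, Finset.mem_Icc]
    constructor
    · rintro ⟨⟨ha, hb⟩, hc⟩
      have : t ≠ 2 * s := by rintro rfl; exact hβ (hclosed.trans hc).symm
      exact ⟨⟨ha, by omega⟩, hc⟩
    · rintro ⟨⟨ha, hb⟩, hc⟩
      exact ⟨⟨ha, by omega⟩, hc⟩
  rw [h1]
  refine Finset.card_bij' (fun t _ => t + 1) (fun t _ => t - 1) ?_ ?_ ?_ ?_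
  · intro a ha
    simp only [Finset.mem_filter, Finset.mem_Icc] at ha ⊢
    exact ⟨⟨by omega, by omega⟩, by simpa using ha.2⟩
  · intro a ha
    simp only [Finset.mem_filter, Finset.mem_Icc] at ha ⊢
    obtain ⟨⟨h1, h2⟩, h3⟩ := ha
    have : a ≠ 1 := by
      rintro rfl
      have h0 : w 0 = β := by simpa using h3
      exact hβ h0.symm
    exact ⟨⟨by omega, by omega⟩, h3⟩
  · intro a ha; show a + 1 - 1 = a; omega
  · intro a ha
    simp only [Finset.mem_filter, Finset.mem_Icc] at ha
    show a - 1 + 1 = a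
    omega


/-- For a closed even walk of length `2s` with no loops and a vertex
`β ≠ w(0)`: (i) the number of marked steps `t` with `w(t) = β` equals the number of
non-marked steps `t` with `w(t−1) = β`; (ii) the number of non-marked steps `t` with
`w(t) = β` equals the number of marked steps `t` with `w(t−1) = β`. -/
theorem marked_arrivals_eq_nonmarked_exits {V : Type*} (s : ℕ) (hs : 1 ≤ s) (w : ℕ → V)
    (hclosed : w 0 = w (2 * s))
    (hnoloop : ∀ t ∈ Finset.Icc 1 (2 * s), w (t - 1) ≠ w t)
    (heven : ∀ e : Sym2 V,
      Even ((Finset.Icc 1 (2 * s)).filter (fun t => edgeAt w t = e)).card)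
    (β : V) (hβ : β ≠ w 0) :
    ((Finset.Icc 1 (2 * s)).filter (fun t => IsMarked w t ∧ w t = β)).card =
        ((Finset.Icc 1 (2 * s)).filter (fun t => ¬ IsMarked w t ∧ w (t - 1) = β)).card ∧
      ((Finset.Icc 1 (2 * s)).filter (fun t => ¬ IsMarked w t ∧ w t = β)).card =
        ((Finset.Icc 1 (2 * s)).filter (fun t => IsMarked w t ∧ w (t - 1) = β)).card := by
  set T := Finset.Icc 1 (2 * s) with hT
  -- splitting "incident to β" into arrival/exit, for marked and non-marked
  have hsplit_un : ∀ p : ℕ → Prop, ∀ t, (p t ∧ β ∈ edgeAt w t)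
      ↔ ((p t ∧ w t = β) ∨ (p t ∧ w (t - 1) = β)) := by
    intro p t
    simp only [edgeAt, Sym2.mem_iff]
    constructor
    · rintro ⟨hp, h | h⟩
      · exact Or.inr ⟨hp, h.symm⟩
      · exact Or.inl ⟨hp, h.symm⟩
    · rintro (⟨hp, h⟩ | ⟨hp, h⟩)
      · exact ⟨hp, Or.inr h.symm⟩
      · exact ⟨hp, Or.inl h.symm⟩
  have hdisj1 : Disjoint (T.filter fun t => IsMarked w t ∧ w t = β)
      (T.filter fun t => IsMarked w t ∧ w (t - 1) = β) := by
    refine Finset.disjoint_left.2 ?_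
    intro a ha hb
    simp only [Finset.mem_filter] at ha hb
    exact hnoloop a ha.1 (hb.2.2.trans ha.2.2.symm)
  have hdisj2 : Disjoint (T.filter fun t => ¬ IsMarked w t ∧ w t = β)
      (T.filter fun t => ¬ IsMarked w t ∧ w (t - 1) = β) := by
    refine Finset.disjoint_left.2 ?_
    intro a ha hb
    simp only [Finset.mem_filter] at ha hb
    exact hnoloop a ha.1 (hb.2.2.trans ha.2.2.symm)
  have ha1 : (T.filter fun t => IsMarked w t ∧ β ∈ edgeAt w t).card
      = (T.filter fun t => IsMarked w t ∧ w t = β).card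
        + (T.filter fun t => IsMarked w t ∧ w (t - 1) = β).card := by
    rw [← Finset.card_union_of_disjoint hdisj1, ← Finset.filter_or]
    apply congrArg
    apply Finset.filter_congr
    intro t _
    exact hsplit_un (fun t => IsMarked w t) t
  have ha2 : (T.filter fun t => ¬ IsMarked w t ∧ β ∈ edgeAt w t).card
      = (T.filter fun t => ¬ IsMarked w t ∧ w t = β).card
        + (T.filter fun t => ¬ IsMarked w t ∧ w (t - 1) = β).card := by
    rw [← Finset.card_union_of_disjoint hdisj2, ← Finset.filter_or]
    apply congrArg
    apply Finset.filter_congr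
    intro t _
    exact hsplit_un (fun t => ¬ IsMarked w t) t
  -- splitting into marked/non-marked parts
  have hb1 : (T.filter fun t => IsMarked w t ∧ w t = β).card
      + (T.filter fun t => ¬ IsMarked w t ∧ w t = β).card
      = (T.filter fun t => w t = β).card := by
    rw [← Finset.card_union_of_disjoint, ← Finset.filter_or]
    · apply congrArg
      apply Finset.filter_congr
      intro t _
      tauto
    · refine Finset.disjoint_left.2 ?_
      intro a ha hb
      simp only [Finset.mem_filter] at ha hb
      exact hb.2.1 ha.2.1
  have hb2 : (T.filter fun t => IsMarked w t ∧ w (t - 1) = β).card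
      + (T.filter fun t => ¬ IsMarked w t ∧ w (t - 1) = β).card
      = (T.filter fun t => w (t - 1) = β).card := by
    rw [← Finset.card_union_of_disjoint, ← Finset.filter_or]
    · apply congrArg
      apply Finset.filter_congr
      intro t _
      tauto
    · refine Finset.disjoint_left.2 ?_
      intro a ha hb
      simp only [Finset.mem_filter] at ha hb
      exact hb.2.1 ha.2.1
  -- Lemma B: marked incident steps = non-marked incident steps
  have hB : (T.filter fun t => IsMarked w t ∧ β ∈ edgeAt w t).card
      = (T.filter fun t => ¬ IsMarked w t ∧ β ∈ edgeAt w t).card := by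
    set A := T.filter (fun t => β ∈ edgeAt w t) with hA
    set B := A.image (edgeAt w) with hBdef
    have hset1 : T.filter (fun t => IsMarked w t ∧ β ∈ edgeAt w t)
        = A.filter (fun t => IsMarked w t) := by
      rw [hA, Finset.filter_filter]
      apply Finset.filter_congr
      intro t _
      tauto
    have hset2 : T.filter (fun t => ¬ IsMarked w t ∧ β ∈ edgeAt w t)
        = A.filter (fun t => ¬ IsMarked w t) := by
      rw [hA, Finset.filter_filter]
      apply Finset.filter_congr
      intro t _
      tauto
    rw [hset1, hset2]
    have hfib1 := Finset.card_eq_sum_card_fiberwise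
      (s := A.filter (fun t => IsMarked w t)) (t := B) (f := edgeAt w)
      (fun x hx => Finset.mem_image_of_mem _ (Finset.mem_of_mem_filter _ hx))
    have hfib2 := Finset.card_eq_sum_card_fiberwise
      (s := A.filter (fun t => ¬ IsMarked w t)) (t := B) (f := edgeAt w)
      (fun x hx => Finset.mem_image_of_mem _ (Finset.mem_of_mem_filter _ hx))
    rw [hfib1, hfib2]
    apply Finset.sum_congr rfl
    intro e he
    have hβe : β ∈ e := by
      rw [hBdef] at he
      simp only [Finset.mem_image] at he
      obtain ⟨t, ht, rfl⟩ := he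
      rw [hA] at ht
      exact (Finset.mem_filter.1 ht).2
    set Se := T.filter (fun t => edgeAt w t = e) with hSe
    have hfiber1 : (A.filter (fun t => IsMarked w t)).filter (fun t => edgeAt w t = e)
        = Se.filter (fun t => IsMarked w t) := by
      ext t
      simp only [Finset.mem_filter, hA, hSe]
      constructor
      · rintro ⟨⟨⟨h1, h2⟩, h3⟩, h4⟩
        exact ⟨⟨h1, h4⟩, h3⟩
      · rintro ⟨⟨h1, h2⟩, h3⟩
        exact ⟨⟨⟨h1, h2 ▸ hβe⟩, h3⟩, h2⟩
    have hfiber2 : (A.filter (fun t => ¬ IsMarked w t)).filter (fun t => edgeAt w t = e)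
        = Se.filter (fun t => ¬ IsMarked w t) := by
      ext t
      simp only [Finset.mem_filter, hA, hSe]
      constructor
      · rintro ⟨⟨⟨h1, h2⟩, h3⟩, h4⟩
        exact ⟨⟨h1, h4⟩, h3⟩
      · rintro ⟨⟨h1, h2⟩, h3⟩
        exact ⟨⟨⟨h1, h2 ▸ hβe⟩, h3⟩, h2⟩
    rw [hfiber1, hfiber2]
    -- marked ↔ odd rank inside Se
    have hrank : ∀ t ∈ Se, (IsMarked w t ↔ Odd ((Se.filter (· ≤ t)).card)) := by
      intro t ht
      rw [hSe, hT] at ht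
      simp only [Finset.mem_filter, Finset.mem_Icc] at ht
      obtain ⟨⟨h1, h2⟩, h3⟩ := ht
      unfold IsMarked
      rw [h3]
      have heq : (Finset.Icc 1 t).filter (fun t' => edgeAt w t' = e)
          = Se.filter (· ≤ t) := by
        ext t'
        simp only [Finset.mem_filter, Finset.mem_Icc, hSe, hT]
        constructor
        · rintro ⟨⟨g1, g2⟩, g3⟩
          exact ⟨⟨⟨g1, by omega⟩, g3⟩, g2⟩
        · rintro ⟨⟨⟨g1, g2⟩, g3⟩, g4⟩
          exact ⟨⟨g1, g4⟩, g3⟩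
      rw [heq]
    have e1 : Se.filter (fun t => IsMarked w t)
        = Se.filter (fun t => Odd ((Se.filter (· ≤ t)).card)) := by
      apply Finset.filter_congr
      exact hrank
    have e2 : Se.filter (fun t => ¬ IsMarked w t)
        = Se.filter (fun t => ¬ Odd ((Se.filter (· ≤ t)).card)) := by
      apply Finset.filter_congr
      intro t ht
      exact not_congr (hrank t ht)
    rw [e1, e2]
    have hSeEven : Even Se.card := by rw [hSe, hT]; exact heven e
    have := rank_marked_half Se hSeEven
    convert this using 3
  -- assemble
  have hAeq : (T.filter fun t => w t = β).card
      = (T.filter fun t => w (t - 1) = β).card :=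
    arrivals_eq_exits s hs w hclosed β hβ
  constructor <;> omega
end

section
/- Let w be a closed even walk of length 2s on a set V with no loops, let β ∈ V with β ≠ w(0), and let t ∈ {0, 1, …, 2s} be an instant with w(t) ≠ β. Then the number of unordered edges {β, γ} that are traversed an odd number of times by the steps 1, …, t (the t-open edges attached to β) is at most twice the number of marked steps t' ∈ {1, …, t} with w(t') = β. -/
open scoped Classical

namespace Stmt11Aux

variable {V : Type*}

/-- Number of steps in `1..t` traversing the edge `e`. -/
noncomputable def cnt (w : ℕ → V) (e : Sym2 V) (t : ℕ) : ℕ :=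
  ((Finset.Icc 1 t).filter (fun t' => edgeAt w t' = e)).card

/-- Number of marked steps in `1..t` traversing the edge `e`. -/
noncomputable def mcnt (w : ℕ → V) (e : Sym2 V) (t : ℕ) : ℕ :=
  ((Finset.Icc 1 t).filter (fun t' => IsMarked w t' ∧ edgeAt w t' = e)).card

lemma filter_succ_card (p : ℕ → Prop) [DecidablePred p] (t : ℕ) :
    ((Finset.Icc 1 (t + 1)).filter p).card
      = ((Finset.Icc 1 t).filter p).card + (if p (t + 1) then 1 else 0) := by
  have h : Finset.Icc 1 (t + 1) = insert (t + 1) (Finset.Icc 1 t) := by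
    ext x
    simp only [Finset.mem_Icc, Finset.mem_insert]
    omega
  rw [h, Finset.filter_insert]
  split
  · rw [Finset.card_insert_of_notMem (by simp)]
  · simp

lemma cnt_succ (w : ℕ → V) (e : Sym2 V) (t : ℕ) :
    cnt w e (t + 1) = cnt w e t + (if edgeAt w (t + 1) = e then 1 else 0) := by
  unfold cnt
  exact filter_succ_card _ t

lemma isMarked_iff_of_edge (w : ℕ → V) {t : ℕ} {e : Sym2 V} (h : edgeAt w t = e) :
    IsMarked w t ↔ Odd (cnt w e t) := by
  unfold IsMarked cnt
  rw [h]

/-- Per-edge: the marked steps on an edge are the odd-indexed ones, so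
`2 * mcnt = cnt + cnt % 2` (i.e. `mcnt = ⌈cnt/2⌉`). -/
lemma two_mul_mcnt (w : ℕ → V) (e : Sym2 V) : ∀ t, 2 * mcnt w e t = cnt w e t + cnt w e t % 2
  | 0 => by simp [mcnt, cnt]
  | (t + 1) => by
    have ih := two_mul_mcnt w e t
    have hm : mcnt w e (t + 1)
        = mcnt w e t + (if IsMarked w (t + 1) ∧ edgeAt w (t + 1) = e then 1 else 0) := by
      unfold mcnt
      exact filter_succ_card _ t
    have hc := cnt_succ w e t
    by_cases h : edgeAt w (t + 1) = e
    · have hmk : IsMarked w (t + 1) ↔ Odd (cnt w e (t + 1)) := isMarked_iff_of_edge w h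
      rw [if_pos h] at hc
      by_cases hodd : Odd (cnt w e (t + 1))
      · rw [if_pos ⟨hmk.2 hodd, h⟩] at hm
        rw [Nat.odd_iff] at hodd
        omega
      · rw [if_neg (fun hh => hodd (hmk.1 hh.1))] at hm
        rw [Nat.odd_iff] at hodd
        omega
    · rw [if_neg h] at hc
      rw [if_neg (fun hh => h hh.2)] at hm
      omega

/-- Splitting a filter over a disjunction of pointwise incompatible predicates. -/
lemma card_filter_or {α : Type*} {s : Finset α} {p q : α → Prop}
    [DecidablePred p] [DecidablePred q] [DecidablePred (fun x => p x ∨ q x)]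
    (hdisj : ∀ x ∈ s, ¬(p x ∧ q x)) :
    (s.filter (fun x => p x ∨ q x)).card = (s.filter p).card + (s.filter q).card := by
  rw [Finset.card_filter, Finset.card_filter, Finset.card_filter, ← Finset.sum_add_distrib]
  apply Finset.sum_congr rfl
  intro x hx
  by_cases hp : p x <;> by_cases hq : q x
  · exact absurd ⟨hp, hq⟩ (hdisj x hx)
  · simp [hp, hq]
  · simp [hp, hq]
  · simp [hp, hq]

/-- Splitting a filter by whether an additional predicate holds. -/
lemma card_filter_split {α : Type*} {s : Finset α} (p m : α → Prop)
    [DecidablePred p] [DecidablePred (fun x => m x ∧ p x)]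
    [DecidablePred (fun x => ¬m x ∧ p x)] :
    (s.filter p).card
      = (s.filter (fun x => m x ∧ p x)).card + (s.filter (fun x => ¬m x ∧ p x)).card := by
  rw [Finset.card_filter, Finset.card_filter, Finset.card_filter, ← Finset.sum_add_distrib]
  apply Finset.sum_congr rfl
  intro x hx
  by_cases hm : m x <;> by_cases hp : p x <;> simp [hm, hp]

end Stmt11Aux

open Stmt11Aux in
/-- For a closed even walk of length `2s` with no loops, a vertex
`β ≠ w(0)`, and an instant `t ≤ 2s` with `w(t) ≠ β`, the number of unordered edges
attached to `β` that are traversed an odd number of times during the steps `1, …, t`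
(the `t`-open edges at `β`) is at most twice the number of marked steps `t' ≤ t`
with `w(t') = β`. -/
theorem open_edges_le_two_mul_marked_arrivals {V : Type*} (s : ℕ) (hs : 1 ≤ s) (w : ℕ → V)
    (hclosed : w 0 = w (2 * s))
    (hnoloop : ∀ t ∈ Finset.Icc 1 (2 * s), w (t - 1) ≠ w t)
    (heven : ∀ e : Sym2 V,
      Even ((Finset.Icc 1 (2 * s)).filter (fun t' => edgeAt w t' = e)).card)
    (β : V) (hβ : β ≠ w 0) (t : ℕ) (ht : t ≤ 2 * s) (hwt : w t ≠ β) :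
    (((Finset.Icc 1 (2 * s)).image (edgeAt w)).filter
        (fun e => β ∈ e ∧
          Odd ((Finset.Icc 1 t).filter (fun t' => edgeAt w t' = e)).card)).card ≤
      2 * ((Finset.Icc 1 t).filter (fun t' => IsMarked w t' ∧ w t' = β)).card := by
  classical
  -- The edges attached to β traversed in 1..t
  set E : Finset (Sym2 V) := ((Finset.Icc 1 t).image (edgeAt w)).filter (fun e => β ∈ e) with hE
  -- Step 1: the LHS set equals the set of edges in E with odd count.
  have hLHS : (((Finset.Icc 1 (2 * s)).image (edgeAt w)).filter
        (fun e => β ∈ e ∧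
          Odd ((Finset.Icc 1 t).filter (fun t' => edgeAt w t' = e)).card))
      = E.filter (fun e => Odd (cnt w e t)) := by
    ext e
    simp only [hE, Finset.mem_filter, Finset.mem_image, cnt, and_assoc]
    constructor
    · rintro ⟨⟨t', ht', rfl⟩, hbe, hodd⟩
      have hne : ((Finset.Icc 1 t).filter
          (fun u => edgeAt w u = edgeAt w t')).Nonempty := by
        rw [← Finset.card_pos]
        exact hodd.pos
      obtain ⟨u, hu⟩ := hne
      simp only [Finset.mem_filter] at hu
      exact ⟨⟨u, hu.1, hu.2⟩, hbe, hodd⟩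
    · rintro ⟨⟨t', ht', rfl⟩, hbe, hodd⟩
      refine ⟨⟨t', ?_, rfl⟩, hbe, hodd⟩
      simp only [Finset.mem_Icc] at ht' ⊢
      omega
  rw [hLHS]
  -- Per-vertex counts over steps 1..t:
  -- M = marked steps at β, T = all steps at β, A = arrivals, D = departures, etc.
  set M := ((Finset.Icc 1 t).filter (fun t' => IsMarked w t' ∧ β ∈ edgeAt w t')).card with hM
  set T := ((Finset.Icc 1 t).filter (fun t' => β ∈ edgeAt w t')).card with hT
  -- fiberwise counting over edges
  have hMsum : M = ∑ e ∈ E, mcnt w e t := by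
    rw [hM, Finset.card_eq_sum_card_fiberwise (f := edgeAt w) (t := E) ?_]
    · apply Finset.sum_congr rfl
      intro e he
      simp only [hE, Finset.mem_filter] at he
      rw [Finset.filter_filter, mcnt]
      apply congrArg Finset.card
      apply Finset.filter_congr
      intro x hx
      constructor
      · rintro ⟨⟨h1, _⟩, h3⟩; exact ⟨h1, h3⟩
      · rintro ⟨h1, h3⟩; exact ⟨⟨h1, h3 ▸ he.2⟩, h3⟩
    · intro x hx
      simp only [Finset.mem_coe, Finset.mem_filter] at hx
      simp only [Finset.mem_coe, hE, Finset.mem_filter, Finset.mem_image]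
      exact ⟨⟨x, hx.1, rfl⟩, hx.2.2⟩
  have hTsum : T = ∑ e ∈ E, cnt w e t := by
    rw [hT, Finset.card_eq_sum_card_fiberwise (f := edgeAt w) (t := E) ?_]
    · apply Finset.sum_congr rfl
      intro e he
      simp only [hE, Finset.mem_filter] at he
      rw [Finset.filter_filter, cnt]
      apply congrArg Finset.card
      apply Finset.filter_congr
      intro x hx
      constructor
      · rintro ⟨_, h3⟩; exact h3
      · rintro h3; exact ⟨h3 ▸ he.2, h3⟩
    · intro x hx
      simp only [Finset.mem_coe, Finset.mem_filter] at hx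
      simp only [Finset.mem_coe, hE, Finset.mem_filter, Finset.mem_image]
      exact ⟨⟨x, hx.1, rfl⟩, hx.2⟩
  have hOpensum : (E.filter (fun e => Odd (cnt w e t))).card
      = ∑ e ∈ E, cnt w e t % 2 := by
    rw [Finset.card_filter]
    apply Finset.sum_congr rfl
    intro e _
    by_cases h : Odd (cnt w e t)
    · rw [if_pos h, Nat.odd_iff.1 h]
    · rw [if_neg h]
      rw [Nat.odd_iff] at h
      omega
  -- Key identity: 2 * M = T + open
  have hkey : 2 * M = T + (E.filter (fun e => Odd (cnt w e t))).card := by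
    rw [hMsum, hTsum, hOpensum, Finset.mul_sum, ← Finset.sum_add_distrib]
    exact Finset.sum_congr rfl (fun e _ => two_mul_mcnt w e t)
  -- T splits into arrivals and departures
  have hmem_edge : ∀ t' ∈ Finset.Icc 1 t, (β ∈ edgeAt w t' ↔ (w (t' - 1) = β ∨ w t' = β)) := by
    intro t' _
    simp only [edgeAt, Sym2.mem_iff]
    constructor
    · rintro (h | h) <;> [left; right] <;> exact h.symm
    · rintro (h | h) <;> [left; right] <;> exact h.symm
  have hdisj : ∀ t' ∈ Finset.Icc 1 t, ¬(w (t' - 1) = β ∧ w t' = β) := by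
    intro t' ht' ⟨h1, h2⟩
    refine hnoloop t' ?_ (h1.trans h2.symm)
    simp only [Finset.mem_Icc] at ht' ⊢
    omega
  have hTsplit : T = ((Finset.Icc 1 t).filter (fun t' => w (t' - 1) = β)).card
      + ((Finset.Icc 1 t).filter (fun t' => w t' = β)).card := by
    rw [hT, congrArg Finset.card (Finset.filter_congr hmem_edge)]
    exact card_filter_or hdisj
  -- M splits similarly
  have hdisj' : ∀ t' ∈ Finset.Icc 1 t,
      ¬((IsMarked w t' ∧ w (t' - 1) = β) ∧ (IsMarked w t' ∧ w t' = β)) := by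
    intro t' ht' ⟨h1, h2⟩
    exact hdisj t' ht' ⟨h1.2, h2.2⟩
  have hMsplit : M = ((Finset.Icc 1 t).filter (fun t' => IsMarked w t' ∧ w (t' - 1) = β)).card
      + ((Finset.Icc 1 t).filter (fun t' => IsMarked w t' ∧ w t' = β)).card := by
    have hcg : (Finset.Icc 1 t).filter (fun t' => IsMarked w t' ∧ β ∈ edgeAt w t')
        = (Finset.Icc 1 t).filter
            (fun t' => (IsMarked w t' ∧ w (t' - 1) = β) ∨ (IsMarked w t' ∧ w t' = β)) := by
      apply Finset.filter_congr
      intro x hx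
      rw [hmem_edge x hx]
      tauto
    rw [hM, congrArg Finset.card hcg]
    exact card_filter_or hdisj' 
  -- Arrivals = departures (since w 0 ≠ β and w t ≠ β)
  have hAD : ((Finset.Icc 1 t).filter (fun t' => w (t' - 1) = β)).card
      = ((Finset.Icc 1 t).filter (fun t' => w t' = β)).card := by
    apply Finset.card_nbij' (fun x => x - 1) (fun x => x + 1)
    · intro a ha
      simp only [Finset.mem_coe, Finset.mem_filter, Finset.mem_Icc] at ha ⊢
      have h0 : a - 1 ≠ 0 := by
        intro h
        exact hβ (h ▸ ha.2).symm
      exact ⟨⟨by omega, by omega⟩, ha.2⟩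
    · intro a ha
      simp only [Finset.mem_coe, Finset.mem_filter, Finset.mem_Icc] at ha ⊢
      have hat : a ≠ t := by
        intro h
        exact hwt (h ▸ ha.2)
      refine ⟨⟨by omega, by omega⟩, by simpa using ha.2⟩
    · intro a ha
      simp only [Finset.mem_coe, Finset.mem_filter, Finset.mem_Icc] at ha
      dsimp only; omega
    · intro a ha
      simp only [Finset.mem_coe, Finset.mem_filter, Finset.mem_Icc] at ha
      dsimp only; omega
  -- Split arrivals and departures by markedness
  have hAsplit := card_filter_split (s := Finset.Icc 1 t)
    (fun t' => w t' = β) (fun t' => IsMarked w t')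
  have hDsplit := card_filter_split (s := Finset.Icc 1 t)
    (fun t' => w (t' - 1) = β) (fun t' => IsMarked w t')
  -- D marked part relates to M: M = MD + MA (hMsplit). Conclude by arithmetic.
  omega
end

section
/- Let η ≥ 1 be a real number and 0 < δ₀ < 1, and suppose that the jointly independent identically distributed random variables {a_{ij} : 1 ≤ i ≤ j} satisfy E[|a_{ij}|^{2(η+δ₀)}] < ∞. Then for every δ with 0 < δ ≤ δ₀/(η(η+1)), almost surely there exists N such that for all n ≥ N and all 1 ≤ i ≤ j ≤ n one has |a_{ij}| ≤ n^{1/η − δ}; equivalently, the event that |a_{ij}| > n^{1/η−δ} for some 1 ≤ i ≤ j ≤ n occurs only for finitely many n, with probability one. -/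
set_option maxHeartbeats 1000000


open MeasureTheory ProbabilityTheory Filter

/-- Let `{a_{ij} : i ≤ j}` be jointly independent identically distributed
random variables with `E|a_{ij}|^{2(η+δ₀)} < ∞`, where `η ≥ 1` and `0 < δ₀ < 1`.  Then for
every `0 < δ ≤ δ₀/(η(η+1))`, almost surely there is `N` such that for all `n ≥ N` and all
`1 ≤ i ≤ j ≤ n` one has `|a_{ij}| ≤ n^{1/η−δ}`. -/
theorem ae_eventually_entries_small
    {Ω : Type*} [MeasurableSpace Ω] (P : Measure Ω) [IsProbabilityMeasure P]
    (a : ℕ → ℕ → Ω → ℝ)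
    (ha_meas : ∀ i j, Measurable (a i j))
    (ha_indep : iIndepFun
      (fun p : {p : ℕ × ℕ // p.1 ≤ p.2} => a p.1.1 p.1.2) P)
    (ha_ident : ∀ i j k l, i ≤ j → k ≤ l → IdentDistrib (a i j) (a k l) P P)
    (η δ₀ : ℝ) (hη : 1 ≤ η) (hδ₀ : 0 < δ₀) (hδ₀1 : δ₀ < 1)
    (ha_mom : Integrable (fun ω => |a 0 0 ω| ^ (2 * (η + δ₀))) P) :
    ∀ δ : ℝ, 0 < δ → δ ≤ δ₀ / (η * (η + 1)) →
      ∀ᵐ ω ∂P, ∃ N : ℕ, ∀ n ≥ N, ∀ i j : ℕ, 1 ≤ i → i ≤ j → j ≤ n →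
        |a i j ω| ≤ (n : ℝ) ^ ((1 : ℝ) / η - δ) := by
  intro δ hδ hδle
  have hη0 : (0:ℝ) < η := lt_of_lt_of_le one_pos hη
  have hX : (0:ℝ) < η * (η + 1) := by nlinarith
  have hδle' : δ * (η * (η + 1)) ≤ δ₀ := (le_div_iff₀ hX).mp hδle
  set p : ℝ := 2 * (η + δ₀) with hp_def
  set α : ℝ := 1 / η - δ with hα_def
  have hp : (0:ℝ) < p := by nlinarith
  have hinv : η * (1 / η) = 1 := by field_simp
  have hα : (0:ℝ) < α := by
    have hδη : δ * η < 1 := by nlinarith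
    have : δ < 1 / η := (lt_div_iff₀ hη0).mpr (by linarith [mul_comm δ η])
    simpa [hα_def] using sub_pos.mpr this
  have hαp : (2:ℝ) < α * p := by
    have h1 : 0 < δ * η * (1 - δ₀) := mul_pos (mul_pos hδ hη0) (by linarith)
    rw [hα_def, hp_def]
    nlinarith [mul_pos hδ hη0, mul_pos hδ₀ hη0]
  set q : ℝ := α * p / 2 with hq_def
  have hq1 : (1:ℝ) < q := (one_lt_div (by norm_num : (0:ℝ) < 2)).mpr hαp
  have hq0 : (0:ℝ) < q := by linarith
  -- the moment
  set M : ℝ := ∫ ω, |a 0 0 ω| ^ p ∂P with hM_def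
  have hM0 : 0 ≤ M := integral_nonneg fun ω => Real.rpow_nonneg (abs_nonneg _) _
  -- the exceptional events
  set E : ℕ × ℕ → Set Ω := fun s =>
    if 1 ≤ s.1 ∧ s.1 ≤ s.2 then {ω | ((s.2 : ℝ)) ^ α < |a s.1 s.2 ω|} else ∅ with hE_def
  -- the summable bound
  set b : ℕ × ℕ → ℝ := fun s => M * (((s.1 : ℝ)) ^ (-q) * ((s.2 : ℝ)) ^ (-q)) with hb_def
  have hb_sum : Summable b := by
    apply Summable.mul_left
    refine Summable.mul_of_nonneg (f := fun n : ℕ => ((n:ℝ)) ^ (-q))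
      (g := fun n : ℕ => ((n:ℝ)) ^ (-q)) ?_ ?_ ?_ ?_
    · exact Real.summable_nat_rpow.mpr (by linarith)
    · exact Real.summable_nat_rpow.mpr (by linarith)
    · exact fun n => Real.rpow_nonneg (Nat.cast_nonneg n) _
    · exact fun n => Real.rpow_nonneg (Nat.cast_nonneg n) _
  have hb_nonneg : ∀ s, 0 ≤ b s := by
    intro s
    exact mul_nonneg hM0 (mul_nonneg (Real.rpow_nonneg (Nat.cast_nonneg _) _)
      (Real.rpow_nonneg (Nat.cast_nonneg _) _))
  -- measurability of the transformed variables
  have hφ : Measurable fun x : ℝ => |x| ^ p :=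
    ((Real.continuous_rpow_const hp.le).comp continuous_abs).measurable
  -- the key per-event estimate
  have hE_bound : ∀ s : ℕ × ℕ, P (E s) ≤ ENNReal.ofReal (b s) := by
    rintro ⟨i, j⟩
    by_cases hij : 1 ≤ i ∧ i ≤ j
    · have hj1 : (1:ℝ) ≤ (j:ℝ) := by
        exact_mod_cast le_trans hij.1 hij.2
      have hi1 : (1:ℝ) ≤ (i:ℝ) := by exact_mod_cast hij.1
      have hj0 : (0:ℝ) < (j:ℝ) := lt_of_lt_of_le one_pos hj1
      have hi0 : (0:ℝ) < (i:ℝ) := lt_of_lt_of_le one_pos hi1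
      have hid : IdentDistrib (a i j) (a 0 0) P P := ha_ident i j 0 0 hij.2 le_rfl
      have hidp : IdentDistrib (fun ω => |a i j ω| ^ p) (fun ω => |a 0 0 ω| ^ p) P P :=
        hid.comp hφ
      have hint : Integrable (fun ω => |a i j ω| ^ p) P :=
        hidp.integrable_iff.mpr ha_mom
      have hieq : ∫ ω, |a i j ω| ^ p ∂P = M := hidp.integral_eq
      set ε : ℝ := (j : ℝ) ^ (α * p) with hε_def
      have hε0 : 0 < ε := Real.rpow_pos_of_pos hj0 _
      have hmarkov := mul_meas_ge_le_integral_of_nonneg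
        (f := fun ω => |a i j ω| ^ p) (μ := P)
        (Eventually.of_forall fun ω => Real.rpow_nonneg (abs_nonneg _) _) hint ε
      rw [hieq] at hmarkov
      have hsub : E (i, j) ⊆ {ω | ε ≤ |a i j ω| ^ p} := by
        intro ω hω
        rw [hE_def] at hω
        simp only [if_pos hij, Set.mem_setOf_eq] at hω
        have h1 : ((j:ℝ) ^ α) ^ p ≤ |a i j ω| ^ p :=
          Real.rpow_le_rpow (Real.rpow_nonneg hj0.le _) hω.le hp.le
        rwa [← Real.rpow_mul hj0.le] at h1
      have hmeas_ne : P {ω | ε ≤ |a i j ω| ^ p} ≠ ⊤ := measure_ne_top _ _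
      have h2 : (P {ω | ε ≤ |a i j ω| ^ p}).toReal ≤ M / ε := by
        rw [le_div_iff₀ hε0]
        rw [measureReal_def] at hmarkov
        linarith [hmarkov]
      have h3 : P (E (i, j)) ≤ ENNReal.ofReal (M / ε) := by
        calc P (E (i, j)) ≤ P {ω | ε ≤ |a i j ω| ^ p} := measure_mono hsub
          _ = ENNReal.ofReal ((P {ω | ε ≤ |a i j ω| ^ p}).toReal) :=
            (ENNReal.ofReal_toReal hmeas_ne).symm
          _ ≤ ENNReal.ofReal (M / ε) := ENNReal.ofReal_le_ofReal h2
      refine h3.trans (ENNReal.ofReal_le_ofReal ?_)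
      -- M / ε ≤ b (i, j)
      have hje : ε = (j:ℝ) ^ q * (j:ℝ) ^ q := by
        rw [hε_def, ← Real.rpow_add hj0]
        congr 1
        rw [hq_def]; ring
      have hiq : (i:ℝ) ^ q ≤ (j:ℝ) ^ q :=
        Real.rpow_le_rpow hi0.le (by exact_mod_cast hij.2) hq0.le
      have hiq0 : (0:ℝ) < (i:ℝ) ^ q := Real.rpow_pos_of_pos hi0 _
      have hjq0 : (0:ℝ) < (j:ℝ) ^ q := Real.rpow_pos_of_pos hj0 _
      have key : M / ε ≤ M / ((i:ℝ) ^ q * (j:ℝ) ^ q) := by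
        apply div_le_div_of_nonneg_left hM0 ?_ ?_ |>.trans_eq rfl
        · exact mul_pos hiq0 hjq0
        · rw [hje]; exact mul_le_mul_of_nonneg_right hiq hjq0.le
      refine key.trans_eq ?_
      rw [hb_def]
      simp only
      rw [Real.rpow_neg hi0.le, Real.rpow_neg hj0.le, div_eq_mul_inv, mul_inv]
    · rw [hE_def]
      simp only [if_neg hij]
      simp [hb_nonneg ⟨i, j⟩]
  -- Borel–Cantelli
  have htsum : ∑' s : ℕ × ℕ, P (E s) ≠ ⊤ := by
    have h1 : ∑' s : ℕ × ℕ, P (E s) ≤ ∑' s : ℕ × ℕ, ENNReal.ofReal (b s) :=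
      ENNReal.tsum_le_tsum hE_bound
    have h2 : ∑' s : ℕ × ℕ, ENNReal.ofReal (b s) = ENNReal.ofReal (∑' s, b s) :=
      (ENNReal.ofReal_tsum_of_nonneg hb_nonneg hb_sum).symm
    rw [h2] at h1
    exact ne_top_of_le_ne_top ENNReal.ofReal_ne_top h1
  filter_upwards [ae_finite_setOf_mem htsum] with ω hω
  -- construct N
  have htend : ∀ s ∈ hω.toFinset, ∀ᶠ n : ℕ in atTop, |a s.1 s.2 ω| ≤ (n : ℝ) ^ α := by
    intro s _
    have h1 : Tendsto (fun n : ℕ => ((n : ℝ)) ^ α) atTop atTop :=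
      (tendsto_rpow_atTop hα).comp tendsto_natCast_atTop_atTop
    exact h1.eventually_ge_atTop _
  have hall : ∀ᶠ n : ℕ in atTop, ∀ s ∈ hω.toFinset, |a s.1 s.2 ω| ≤ (n : ℝ) ^ α :=
    (hω.toFinset).eventually_all.mpr htend
  obtain ⟨N, hN⟩ := hall.exists_forall_of_atTop
  refine ⟨N, fun n hn i j hi hijle hjn => ?_⟩
  have hj0 : (0:ℝ) ≤ (j:ℝ) := Nat.cast_nonneg _
  have hjn' : (j:ℝ) ≤ (n:ℝ) := by exact_mod_cast hjn
  by_cases hmem : ω ∈ E (i, j)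
  · have : (i, j) ∈ hω.toFinset := by
      rw [Set.Finite.mem_toFinset]; exact hmem
    exact hN n hn (i, j) this
  · rw [hE_def] at hmem
    simp only [if_pos (And.intro hi hijle), Set.mem_setOf_eq, not_lt] at hmem
    calc |a i j ω| ≤ (j:ℝ) ^ α := hmem
      _ ≤ (n:ℝ) ^ α := Real.rpow_le_rpow hj0 hjn' hα.le
end
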